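/- The function f(x) = (sin x - x)/(x cos x - sin x) is strictly increasing on (0, π), and consequently f(x) ≤ f(δ) = (sin δ - δ)/(δ cos δ - sin δ) for all 0 < x ≤ δ ≤ π. In particular f(x) < 1 for all x ∈ (0, π). -/

import Mathlib

open Real Set

/-- `sin x - x cos x > 0` for `0 < x ≤ π`. -/
lemma stmt16_aux1 {x : ℝ} (hx : 0 < x) (hxπ : x ≤ π) : x * Real.cos x < Real.sin x := by
  have hmono : StrictMonoOn (fun y : ℝ => Real.sin y - y * Real.cos y) (Icc 0 π) := by
    apply strictMonoOn_of_deriv_pos (convex_Icc 0 π)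
    · exact (Real.continuous_sin.sub (continuous_id.mul Real.continuous_cos)).continuousOn
    · intro y hy
      rw [interior_Icc] at hy
      have hd : HasDerivAt (fun y : ℝ => Real.sin y - y * Real.cos y)
          (Real.cos y - (1 * Real.cos y + y * (-Real.sin y))) y :=
        (Real.hasDerivAt_sin y).sub ((hasDerivAt_id y).mul (Real.hasDerivAt_cos y))
      rw [hd.deriv]
      have := Real.sin_pos_of_pos_of_lt_pi hy.1 hy.2
      nlinarith [hy.1]
  have h0 : (0 : ℝ) ∈ Icc 0 π := ⟨le_refl 0, Real.pi_pos.le⟩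
  have hxm : x ∈ Icc 0 π := ⟨hx.le, hxπ⟩
  have := hmono h0 hxm hx
  simp at this
  linarith

/-- Huygens' inequality: `3t < tan t + 2 sin t` on `(0, π/2)`. -/
lemma stmt16_aux2 {t : ℝ} (ht : 0 < t) (ht2 : t < π / 2) :
    3 * t < Real.tan t + 2 * Real.sin t := by
  have hmono : StrictMonoOn (fun y : ℝ => Real.tan y + 2 * Real.sin y - 3 * y)
      (Ico 0 (π / 2)) := by
    apply strictMonoOn_of_deriv_pos (convex_Ico 0 (π / 2))
    · apply ContinuousOn.sub
      · apply ContinuousOn.add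
        · apply Real.continuousOn_tan.mono
          intro y hy
          have : 0 < Real.cos y := Real.cos_pos_of_mem_Ioo
            ⟨by linarith [hy.1, Real.pi_pos], hy.2⟩
          exact this.ne'
        · exact (continuous_const.mul Real.continuous_sin).continuousOn
      · exact (continuous_const.mul continuous_id).continuousOn
    · intro y hy
      rw [interior_Ico] at hy
      have hc : 0 < Real.cos y := Real.cos_pos_of_mem_Ioo
        ⟨by linarith [hy.1, Real.pi_pos], hy.2⟩
      have hsy : 0 < Real.sin y := Real.sin_pos_of_pos_of_lt_pi hy.1
        (by linarith [Real.pi_pos, hy.2])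
      have hc1 : Real.cos y < 1 := by
        nlinarith [Real.sin_sq_add_cos_sq y, mul_pos hsy hsy]
      have hd : HasDerivAt (fun y : ℝ => Real.tan y + 2 * Real.sin y - 3 * y)
          (1 / Real.cos y ^ 2 + 2 * Real.cos y - 3) y := by
        have h1 := (Real.hasDerivAt_tan hc.ne').add
          ((Real.hasDerivAt_sin y).const_mul 2)
        have h2 := h1.sub ((hasDerivAt_id y).const_mul 3)
        have h3 : HasDerivAt (fun y : ℝ => Real.tan y + 2 * Real.sin y - 3 * y)
            (1 / Real.cos y ^ 2 + 2 * Real.cos y - 3 * 1) y := h2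
        rwa [mul_one] at h3
      rw [hd.deriv]
      have key : 0 < (1 - Real.cos y) ^ 2 * (1 + 2 * Real.cos y) := by nlinarith
      have : 1 / Real.cos y ^ 2 + 2 * Real.cos y - 3
          = (1 - Real.cos y) ^ 2 * (1 + 2 * Real.cos y) / Real.cos y ^ 2 := by
        field_simp; ring
      rw [this]
      positivity
  have h0 : (0 : ℝ) ∈ Ico 0 (π / 2) := ⟨le_refl 0, by linarith [Real.pi_pos]⟩
  have htm : t ∈ Ico 0 (π / 2) := ⟨ht.le, ht2⟩
  have := hmono h0 htm ht
  simp [Real.tan_zero] at this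
  linarith

/-- Positivity of the derivative numerator. -/
lemma stmt16_aux3 {x : ℝ} (hx : 0 < x) (hxπ : x < π) :
    0 < (x + Real.sin x) * (1 - Real.cos x) - x ^ 2 * Real.sin x := by
  set t := x / 2 with htdef
  have ht : 0 < t := by positivity
  have ht2 : t < π / 2 := by simp only [htdef]; linarith
  have hc : 0 < Real.cos t := Real.cos_pos_of_mem_Ioo ⟨by linarith [Real.pi_pos], ht2⟩
  have hs : 0 < Real.sin t := Real.sin_pos_of_pos_of_lt_pi ht (by linarith [Real.pi_pos])
  have hst : Real.sin t < t := Real.sin_lt ht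
  have huy := stmt16_aux2 ht ht2
  rw [Real.tan_eq_sin_div_cos] at huy
  have hkey : 3 * t * Real.cos t < Real.sin t + 2 * Real.sin t * Real.cos t := by
    have h := mul_lt_mul_of_pos_right huy hc
    rw [add_mul, div_mul_cancel₀ _ hc.ne'] at h
    nlinarith [h]
  have hx2 : x = 2 * t := by rw [htdef]; ring
  have hsinx : Real.sin x = 2 * Real.sin t * Real.cos t := by
    rw [hx2, Real.sin_two_mul]
  have hcosx : Real.cos x = 2 * Real.cos t ^ 2 - 1 := by
    rw [hx2, Real.cos_two_mul]
  have hpyth := Real.sin_sq_add_cos_sq t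
  have h2c : Real.cos t ^ 2 = 1 - Real.sin t ^ 2 := by linarith [hpyth]
  rw [hsinx, hcosx, hx2, h2c]
  nlinarith [mul_pos hs (mul_pos ht (sub_pos.2 hkey)),
    mul_nonneg (mul_nonneg hs.le hc.le) (sq_nonneg (t - Real.sin t))]

theorem stmt16 :
    let f : ℝ → ℝ := fun x => (Real.sin x - x) / (x * Real.cos x - Real.sin x)
    StrictMonoOn f (Set.Ioo 0 Real.pi) ∧
    (∀ x δ : ℝ, 0 < x → x ≤ δ → δ ≤ Real.pi → f x ≤ f δ) ∧
    (∀ x ∈ Set.Ioo (0 : ℝ) Real.pi, f x < 1) := by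
  intro f
  have hDneg : ∀ x : ℝ, 0 < x → x ≤ π → x * Real.cos x - Real.sin x < 0 := fun x h1 h2 =>
    sub_neg.2 (stmt16_aux1 h1 h2)
  have hmono : StrictMonoOn f (Set.Ioo 0 π) := by
    apply strictMonoOn_of_deriv_pos (convex_Ioo 0 π)
    · apply ContinuousOn.div
      · exact (Real.continuous_sin.sub continuous_id).continuousOn
      · exact ((continuous_id.mul Real.continuous_cos).sub Real.continuous_sin).continuousOn
      · exact fun x hx => (hDneg x hx.1 hx.2.le).ne
    · intro x hx
      rw [interior_Ioo] at hx
      have hD := hDneg x hx.1 hx.2.le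
      have hd : HasDerivAt f
          (((Real.cos x - 1) * (x * Real.cos x - Real.sin x) -
            (Real.sin x - x) * (1 * Real.cos x + x * -Real.sin x - Real.cos x)) /
            (x * Real.cos x - Real.sin x) ^ 2) x := by
        exact ((Real.hasDerivAt_sin x).sub (hasDerivAt_id x)).div
          (((hasDerivAt_id x).mul (Real.hasDerivAt_cos x)).sub (Real.hasDerivAt_sin x)) hD.ne
      rw [hd.deriv]
      apply div_pos
      · have hg := stmt16_aux3 hx.1 hx.2
        have hpyth := Real.sin_sq_add_cos_sq x
        have heq : (Real.cos x - 1) * (x * Real.cos x - Real.sin x) -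
            (Real.sin x - x) * (1 * Real.cos x + x * -Real.sin x - Real.cos x)
            = (x + Real.sin x) * (1 - Real.cos x) - x ^ 2 * Real.sin x := by
          linear_combination x * hpyth
        rw [heq]
        exact hg
      · exact pow_two_pos_of_ne_zero hD.ne
  have hlt1 : ∀ x ∈ Set.Ioo (0 : ℝ) π, f x < 1 := by
    intro x hx
    have hD := hDneg x hx.1 hx.2.le
    have ht2 : x / 2 < π / 2 := by linarith [hx.2]
    have hc : 0 < Real.cos (x / 2) :=
      Real.cos_pos_of_mem_Ioo ⟨by linarith [Real.pi_pos, hx.1], ht2⟩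
    have hsc := stmt16_aux1 (by linarith [hx.1] : (0:ℝ) < x / 2) (by linarith [Real.pi_pos])
    have hsinx : Real.sin x = 2 * Real.sin (x / 2) * Real.cos (x / 2) := by
      have := Real.sin_two_mul (x / 2)
      rw [show 2 * (x / 2) = x by ring] at this
      exact this
    have hcosx : Real.cos x = 2 * Real.cos (x / 2) ^ 2 - 1 := by
      have := Real.cos_two_mul (x / 2)
      rw [show 2 * (x / 2) = x by ring] at this
      exact this
    have hND : 0 < (Real.sin x - x) - (x * Real.cos x - Real.sin x) := by
      rw [hsinx, hcosx]
      nlinarith [mul_pos hc (sub_pos.2 hsc)]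
    have heq : f x - 1 = ((Real.sin x - x) - (x * Real.cos x - Real.sin x)) /
        (x * Real.cos x - Real.sin x) := by
      show (Real.sin x - x) / (x * Real.cos x - Real.sin x) - 1 = _
      rw [eq_div_iff hD.ne, sub_mul, div_mul_cancel₀ _ hD.ne]
      ring
    have : f x - 1 < 0 := by
      rw [heq]; exact div_neg_of_pos_of_neg hND hD
    linarith
  refine ⟨hmono, ?_, hlt1⟩
  intro x δ hx hxδ hδπ
  rcases eq_or_lt_of_le hxδ with rfl | hlt
  · exact le_refl _
  rcases eq_or_lt_of_le hδπ with rfl | hlt2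
  · have h1 : f x < 1 := hlt1 x ⟨hx, hlt⟩
    have h2 : f π = 1 := by
      show (Real.sin π - π) / (π * Real.cos π - Real.sin π) = 1
      rw [Real.sin_pi, Real.cos_pi]
      rw [show π * (-1) - 0 = -π by ring, show (0:ℝ) - π = -π by ring]
      exact div_self (neg_ne_zero.2 Real.pi_pos.ne')
    linarith
  · exact (hmono ⟨hx, hlt.trans hlt2⟩ ⟨hx.trans hlt, hlt2⟩ hlt).le
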